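/- Let f be a morphism on {a,b}* prolongable on a with f(a) = uaav for some words u, v. For every sequence of positive integers k_1 > k_2 > … > k_t, the word f^{k_1}(u) f^{k_2}(u) ⋯ f^{k_t}(u) f^{k_t}(a) is a prefix of f^{k_1+1}(a). -/

import Mathlib

/-- The extension of a substitution on letters to words. -/
def applyM {α : Type*} (g : α → List α) (w : List α) : List α := w.flatMap g

section
variable (fm : Bool → List Bool)

lemma pref_append_left {p q : List Bool} (x : List Bool) (h : p <+: q) :
    x ++ p <+: x ++ q := by
  obtain ⟨s, hs⟩ := h
  exact ⟨s, by rw [List.append_assoc, hs]⟩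

lemma applyM_append (x y : List Bool) :
    applyM fm (x ++ y) = applyM fm x ++ applyM fm y := by
  simp [applyM]

lemma iter_append (n : ℕ) (x y : List Bool) :
    (applyM fm)^[n] (x ++ y) = (applyM fm)^[n] x ++ (applyM fm)^[n] y := by
  induction n generalizing x y with
  | zero => rfl
  | succ n ih => simp [Function.iterate_succ_apply, applyM_append, ih]

lemma prefix_step (hprol : ∃ w : List Bool, w ≠ [] ∧ fm true = true :: w) (n : ℕ) :
    (applyM fm)^[n] [true] <+: (applyM fm)^[n+1] [true] := by
  obtain ⟨w, -, hw⟩ := hprol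
  rw [Function.iterate_succ_apply]
  have h : applyM fm [true] = [true] ++ w := by simp [applyM, hw]
  rw [h, iter_append]
  exact List.prefix_append _ _

lemma prefix_mono (hprol : ∃ w : List Bool, w ≠ [] ∧ fm true = true :: w)
    {j m : ℕ} (h : j ≤ m) :
    (applyM fm)^[j] [true] <+: (applyM fm)^[m] [true] := by
  induction m with
  | zero => simp_all
  | succ m ih =>
    rcases Nat.lt_or_ge j (m+1) with h' | h'
    · exact (ih (by omega)).trans (prefix_step fm hprol m)
    · have : j = m + 1 := by omega
      subst this; exact List.prefix_refl _

lemma expand (u v : List Bool) (hfa : fm true = u ++ [true, true] ++ v) (n : ℕ) :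
    (applyM fm)^[n+1] [true] =
      (applyM fm)^[n] u ++ ((applyM fm)^[n] [true] ++
        ((applyM fm)^[n] [true] ++ (applyM fm)^[n] v)) := by
  rw [Function.iterate_succ_apply]
  have h : applyM fm [true] = u ++ ([true] ++ ([true] ++ v)) := by
    simp [applyM, hfa]
  rw [h, iter_append, iter_append, iter_append]

lemma aux_chain (hprol : ∃ w : List Bool, w ≠ [] ∧ fm true = true :: w)
    (u v : List Bool) (hfa : fm true = u ++ [true, true] ++ v) :
    ∀ (l : List ℕ) (a0 : ℕ), l.Chain (· > ·) a0 →
      ((a0 :: l).map (fun j => (applyM fm)^[j] u)).flatten ++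
        (applyM fm)^[(a0 :: l).getLast (by simp)] [true] <+:
      (applyM fm)^[a0 + 1] [true] := by
  intro l
  induction l with
  | nil =>
    intro a0 _
    rw [expand fm u v hfa a0]
    simp only [List.map_cons, List.map_nil, List.flatten_cons, List.flatten_nil,
      List.append_nil, List.getLast_singleton]
    exact ⟨(applyM fm)^[a0] [true] ++ (applyM fm)^[a0] v, by simp⟩
  | cons b l' ih =>
    intro a0 hc
    rw [List.Chain, List.isChain_cons_cons] at hc
    obtain ⟨hba, hc'⟩ := hc
    have hIH := ih b hc'
    have h1 : ((b :: l').map (fun j => (applyM fm)^[j] u)).flatten ++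
        (applyM fm)^[(b :: l').getLast (by simp)] [true] <+:
        (applyM fm)^[a0] [true] :=
      hIH.trans (prefix_mono fm hprol (by omega))
    have hlast : (a0 :: b :: l').getLast (by simp) = (b :: l').getLast (by simp) :=
      List.getLast_cons (by simp)
    rw [expand fm u v hfa a0]
    simp only [List.map_cons, List.flatten_cons, hlast]
    rw [List.append_assoc]
    have h2 : ((applyM fm)^[b] u ++ ((b :: l').tail.map
        (fun j => (applyM fm)^[j] u)).flatten) ++
        (applyM fm)^[(b :: l').getLast (by simp)] [true] <+:
        (applyM fm)^[a0] [true] ++ ((applyM fm)^[a0] [true] ++ (applyM fm)^[a0] v) := by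
      simp only [List.map_cons, List.flatten_cons] at h1
      exact h1.trans (List.prefix_append _ _)
    have := pref_append_left ((applyM fm)^[a0] u) h2
    simpa using this
  
lemma aux_chain' (hprol : ∃ w : List Bool, w ≠ [] ∧ fm true = true :: w)
    (u v : List Bool) (hfa : fm true = u ++ [true, true] ++ v)
    (l : List ℕ) (h : l ≠ []) (hc : l.Chain' (· > ·)) :
    (l.map (fun j => (applyM fm)^[j] u)).flatten ++
      (applyM fm)^[l.getLast h] [true] <+:
    (applyM fm)^[l.head h + 1] [true] := by
  match l with
  | a :: l' => exact aux_chain fm hprol u v hfa l' a hc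

end

/-- Letters: `a = true`, `b = false`. `f` is prolongable on `a` and
`f(a) = u·a·a·v`. -/
theorem stmt_11 (fm : Bool → List Bool)
    (hner : ∀ x, fm x ≠ [])
    (hprol : ∃ w : List Bool, w ≠ [] ∧ fm true = true :: w)
    (u v : List Bool) (hfa : fm true = u ++ [true, true] ++ v)
    (t : ℕ) (ht : 0 < t) (k : Fin t → ℕ)
    (hkpos : ∀ i, 0 < k i) (hanti : StrictAnti k) :
    ((List.ofFn (fun i : Fin t => (applyM fm)^[k i] u)).flatten ++
        (applyM fm)^[k ⟨t - 1, by omega⟩] [true]) <+: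
      (applyM fm)^[k ⟨0, ht⟩ + 1] [true] := by
  have hne : List.ofFn k ≠ [] := by
    simp [List.ofFn_eq_nil_iff]; omega
  have hc : (List.ofFn k).Chain' (· > ·) := by
    apply List.Pairwise.isChain
    rw [List.pairwise_ofFn]
    intro i j hij
    exact hanti hij
  have key := aux_chain' fm hprol u v hfa (List.ofFn k) hne hc
  rw [List.map_ofFn, List.getLast_ofFn, List.head_ofFn] at key
  convert key using 3
  rfl
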